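/- Scalar conjugate computation for free coordinates when √(λ0/λ2) ≤ M: for every c ∈ ℝ, the minimum of β ↦ ψ(β) − cβ over β ∈ [−M, M] equals −max(h(|c|), 0). -/

import Mathlib

/-- The function `h` from the dual of the node relaxation. -/
noncomputable def hfun (lam0 lam2 M x : ℝ) : ℝ :=
  if x ≤ 2 * M * lam2 then x ^ 2 / (4 * lam2) - lam0 else M * x - lam0 - lam2 * M ^ 2

/-- The penalty `ψ` for a free coordinate in the regime `√(λ0/λ2) ≤ M`. -/
noncomputable def psiFree (lam0 lam2 : ℝ) (t : ℝ) : ℝ :=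
  if |t| ≤ Real.sqrt (lam0 / lam2) then 2 * Real.sqrt (lam0 * lam2) * |t|
  else lam0 + lam2 * t ^ 2

private lemma lb_aux (lam0 lam2 M A S d t : ℝ) (hlam0 : 0 ≤ lam0)
    (hlam2 : 0 < lam2) (hM : 0 < M)
    (hA0 : 0 ≤ A) (hS0 : 0 ≤ S) (hAS : A * S = lam0) (hASl : A = S * lam2)
    (hSM : S ≤ M) (hd : 0 ≤ d) (ht0 : 0 ≤ t) (htM : t ≤ M) :
    -(max (if d ≤ 2 * M * lam2 then d ^ 2 / (4 * lam2) - lam0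
        else M * d - lam0 - lam2 * M ^ 2) 0) ≤
      (if t ≤ S then 2 * A * t else lam0 + lam2 * t ^ 2) - d * t := by
  have hl2 : lam2 * S ^ 2 = lam0 := by nlinarith
  split_ifs with h1 h2 h2
  · -- d ≤ 2Mλ2, t ≤ S
    rcases le_or_gt d (2 * A) with hc | hc
    · refine le_trans (neg_nonpos_of_nonneg (le_max_right _ _)) ?_
      nlinarith [mul_nonneg (sub_nonneg.2 hc) ht0]
    · refine le_trans (neg_le_neg (le_max_left _ _)) ?_
      have h3 : (d * S - lam0) * (4 * lam2) ≤ d ^ 2 := by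
        nlinarith [sq_nonneg (d - 2 * lam2 * S)]
      have h4 : d * S - lam0 ≤ d ^ 2 / (4 * lam2) := (le_div_iff₀ (by positivity)).2 h3
      nlinarith [mul_nonneg (sub_nonneg.2 hc.le) (sub_nonneg.2 h2)]
  · -- d ≤ 2Mλ2, t > S
    refine le_trans (neg_le_neg (le_max_left _ _)) ?_
    have h3 : (d * t - lam2 * t ^ 2) * (4 * lam2) ≤ d ^ 2 := by
      nlinarith [sq_nonneg (d - 2 * lam2 * t)]
    have h4 : d * t - lam2 * t ^ 2 ≤ d ^ 2 / (4 * lam2) :=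
      (le_div_iff₀ (by positivity)).2 h3
    linarith
  · -- d > 2Mλ2, t ≤ S
    refine le_trans (neg_le_neg (le_max_left _ _)) ?_
    have h1' : 2 * M * lam2 ≤ d := (not_le.1 h1).le
    have hc : 2 * A ≤ d := by nlinarith
    nlinarith [mul_nonneg (sub_nonneg.2 hc) (sub_nonneg.2 h2),
      mul_nonneg (sub_nonneg.2 hSM) (by nlinarith : (0:ℝ) ≤ d - lam2 * (M + S))]
  · -- d > 2Mλ2, t > S
    refine le_trans (neg_le_neg (le_max_left _ _)) ?_
    have h1' : 2 * M * lam2 ≤ d := (not_le.1 h1).le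
    nlinarith [mul_nonneg (sub_nonneg.2 htM) (by nlinarith : (0:ℝ) ≤ d - lam2 * (t + M))]

/-- Scalar conjugate computation for free coordinates when `√(λ0/λ2) ≤ M`: for every
`c ∈ ℝ`, the minimum of `β ↦ ψ(β) − c β` over `β ∈ [−M, M]` equals `−max(h(|c|), 0)`. -/
theorem conjugate_free_coordinate_small_sqrt (lam0 lam2 M : ℝ) (hlam0 : 0 ≤ lam0)
    (hlam2 : 0 < lam2) (hM : 0 < M) (hcond : Real.sqrt (lam0 / lam2) ≤ M) (c : ℝ) :
    IsLeast ((fun β : ℝ => psiFree lam0 lam2 β - c * β) '' Set.Icc (-M) M)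
      (-(max (hfun lam0 lam2 M |c|) 0)) := by
  set S := Real.sqrt (lam0 / lam2) with hSdef
  set A := Real.sqrt (lam0 * lam2) with hAdef
  have hS0 : 0 ≤ S := Real.sqrt_nonneg _
  have hA0 : 0 ≤ A := Real.sqrt_nonneg _
  have hS2 : S ^ 2 = lam0 / lam2 := by rw [hSdef]; exact Real.sq_sqrt (by positivity)
  have hA2 : A ^ 2 = lam0 * lam2 := by rw [hAdef]; exact Real.sq_sqrt (by positivity)
  have hASl : A = S * lam2 := by
    rw [hAdef, hSdef, show lam0 * lam2 = lam0 / lam2 * lam2 ^ 2 by field_simp,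
      Real.sqrt_mul (by positivity), Real.sqrt_sq hlam2.le]
  have hl2 : lam2 * S ^ 2 = lam0 := by rw [hS2]; field_simp
  have hAS : A * S = lam0 := by rw [hASl]; nlinarith
  have hpsiM : psiFree lam0 lam2 M = lam0 + lam2 * M ^ 2 := by
    simp only [psiFree, ← hSdef, ← hAdef, abs_of_pos hM]
    split_ifs with h
    · have hMS : M = S := le_antisymm h hcond
      rw [hMS]; linear_combination 2 * hAS - hl2
    · rfl
  have hpsineg : psiFree lam0 lam2 (-M) = lam0 + lam2 * M ^ 2 := by
    rw [← hpsiM]; simp [psiFree, abs_neg, neg_sq]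
  constructor
  · -- membership
    rcases le_or_gt |c| (2 * A) with hc1 | hc1
    · -- witness 0
      refine ⟨0, Set.mem_Icc.2 ⟨by linarith, hM.le⟩, ?_⟩
      have hcM : |c| ≤ 2 * M * lam2 := by nlinarith [abs_nonneg c]
      have hh : hfun lam0 lam2 M |c| ≤ 0 := by
        simp only [hfun, if_pos hcM]
        rw [sub_nonpos, div_le_iff₀ (by positivity)]
        nlinarith [sq_abs c, abs_nonneg c]
      simp only [psiFree, ← hSdef, ← hAdef, abs_zero, if_pos hS0]
      rw [max_eq_right hh]
      ring
    · rcases le_or_gt |c| (2 * M * lam2) with hc2 | hc2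
      · -- witness c / (2 lam2)
        have habs : |c / (2 * lam2)| = |c| / (2 * lam2) := by
          rw [abs_div, abs_of_pos (show (0:ℝ) < 2 * lam2 by positivity)]
        refine ⟨c / (2 * lam2), Set.mem_Icc.2 (abs_le.1 ?_), ?_⟩
        · rw [habs, div_le_iff₀ (by positivity)]; linarith
        · have hbr : ¬ |c / (2 * lam2)| ≤ S := by
            rw [habs, not_le, lt_div_iff₀ (by positivity)]
            nlinarith
          have hh : hfun lam0 lam2 M |c| = |c| ^ 2 / (4 * lam2) - lam0 := by
            simp only [hfun, if_pos hc2]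
          have hnn : 0 ≤ |c| ^ 2 / (4 * lam2) - lam0 := by
            rw [sub_nonneg, le_div_iff₀ (by positivity)]
            nlinarith [abs_nonneg c]
          simp only [psiFree, ← hSdef, ← hAdef, if_neg hbr]
          rw [hh, max_eq_left hnn, sq_abs]
          field_simp
          ring
      · -- witness ±M
        have hh : hfun lam0 lam2 M |c| = M * |c| - lam0 - lam2 * M ^ 2 := by
          simp only [hfun, if_neg (not_le.2 hc2)]
        have hnn : 0 ≤ M * |c| - lam0 - lam2 * M ^ 2 := by
          nlinarith [mul_le_mul hcond hcond hS0 hM.le]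
        rcases le_or_gt 0 c with hc | hc
        · refine ⟨M, Set.mem_Icc.2 ⟨by linarith, le_refl M⟩, ?_⟩
          show psiFree lam0 lam2 M - c * M = -(max (hfun lam0 lam2 M |c|) 0)
          rw [hpsiM, hh, max_eq_left hnn, abs_of_nonneg hc]
          ring
        · refine ⟨-M, Set.mem_Icc.2 ⟨le_refl (-M), by linarith⟩, ?_⟩
          show psiFree lam0 lam2 (-M) - c * (-M) = -(max (hfun lam0 lam2 M |c|) 0)
          rw [hpsineg, hh, max_eq_left hnn, abs_of_neg hc]
          ring
  · -- lower bound
    rintro x ⟨β, hβ, rfl⟩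
    obtain ⟨hβ1, hβ2⟩ := Set.mem_Icc.1 hβ
    have habs : |β| ≤ M := abs_le.2 ⟨hβ1, hβ2⟩
    have hcb : c * β ≤ |c| * |β| := (le_abs_self _).trans (le_of_eq (abs_mul c β))
    have key := lb_aux lam0 lam2 M A S |c| |β| hlam0 hlam2 hM hA0 hS0 hAS hASl hcond
      (abs_nonneg c) (abs_nonneg β) habs
    have hpsi : psiFree lam0 lam2 β =
        (if |β| ≤ S then 2 * A * |β| else lam0 + lam2 * |β| ^ 2) := by
      rw [hSdef, hAdef]; simp only [psiFree, sq_abs]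
    show -(max (hfun lam0 lam2 M |c|) 0) ≤ psiFree lam0 lam2 β - c * β
    simp only [hfun]
    rw [hpsi]
    rcases le_or_gt (|c|) (2 * M * lam2) with hc | hc <;>
      rcases le_or_gt (|β|) S with hb | hb
    · rw [if_pos hc, if_pos hb]; rw [if_pos hc, if_pos hb] at key; linarith
    · rw [if_pos hc, if_neg (not_le.2 hb)]
      rw [if_pos hc, if_neg (not_le.2 hb)] at key; linarith
    · rw [if_neg (not_le.2 hc), if_pos hb]
      rw [if_neg (not_le.2 hc), if_pos hb] at key; linarith
    · rw [if_neg (not_le.2 hc), if_neg (not_le.2 hb)]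
      rw [if_neg (not_le.2 hc), if_neg (not_le.2 hb)] at key; linarith
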